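/- Every nonarchimedean exponential valuation on a number field is a positive real multiple of the p-adic valuation attached to a unique nonzero prime ideal of the ring of integers. -/

import Mathlib

open NumberField IsDedekindDomain Multiplicative

local notation "ℤₘ₀" => WithZero (Multiplicative ℤ)

private lemma withtop_eq_zero_of_self_add (a : WithTop ℝ) (h : a ≠ ⊤) (h2 : a = a + a) :
    a = 0 := by
  lift a to ℝ using h
  have h3 : a = a + a := by exact_mod_cast h2
  have : a = 0 := by linarith
  exact_mod_cast this

private lemma withtop_eq_zero_of_add_self (a : WithTop ℝ) (h : a ≠ ⊤)
    (h2 : (0 : WithTop ℝ) = a + a) : a = 0 := by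
  lift a to ℝ using h
  have h3 : (0:ℝ) = a + a := by exact_mod_cast h2
  have : a = 0 := by linarith
  exact_mod_cast this

private lemma sum_lower_bound {k : Type*} [Field k] (v : k → WithTop ℝ)
    (hvtop : v 0 = ⊤) (hadd : ∀ x y : k, min (v x) (v y) ≤ v (x + y))
    {ι : Type*} (s : Finset ι) (f : ι → k) (C : WithTop ℝ)
    (h : ∀ i ∈ s, C ≤ v (f i)) : C ≤ v (∑ i ∈ s, f i) := by
  classical
  induction s using Finset.induction with
  | empty => simp [hvtop]
  | @insert j t hx ih =>
    rw [Finset.sum_insert hx]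
    refine le_trans (le_min (h _ (Finset.mem_insert_self j t)) ?_) (hadd _ _)
    exact ih fun i hi => h i (Finset.mem_insert_of_mem hi)

/-- Every nontrivial nonarchimedean exponential valuation on a number field is a positive
multiple of the `𝔭`-adic exponential valuation for a unique nonzero prime ideal `𝔭`. -/
theorem stmt_12 (k : Type*) [Field k] [NumberField k]
    (v : k → WithTop ℝ)
    (h0 : ∀ x : k, v x = ⊤ ↔ x = 0)
    (hmul : ∀ x y : k, v (x * y) = v x + v y)
    (hadd : ∀ x y : k, min (v x) (v y) ≤ v (x + y))
    (hnontriv : ∃ x : k, x ≠ 0 ∧ v x ≠ 0)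
    (hbdd : ∃ B : ℝ, ∀ n : ℤ, (B : WithTop ℝ) ≤ v (n : k)) :
    ∃! 𝔭 : HeightOneSpectrum (𝓞 k), ∃ s : ℝ, 0 < s ∧
      ∀ (x : k) (m : ℤ), x ≠ 0 →
        𝔭.valuation k x = ((Multiplicative.ofAdd (-m) : Multiplicative ℤ) : WithZero (Multiplicative ℤ)) →
        v x = ((s * m : ℝ) : WithTop ℝ) := by
  classical
  obtain ⟨B, hB⟩ := hbdd
  have hvne : ∀ x : k, x ≠ 0 → v x ≠ ⊤ := fun x hx h => hx ((h0 x).1 h)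
  have hvtop : v (0 : k) = ⊤ := (h0 0).2 rfl
  have hv1 : v 1 = 0 := by
    have h2 := hmul 1 1
    rw [one_mul] at h2
    exact withtop_eq_zero_of_self_add _ (hvne 1 one_ne_zero) h2
  have hvneg1 : v (-1 : k) = 0 := by
    have h2 := hmul (-1) (-1)
    rw [neg_mul_neg, one_mul, hv1] at h2
    exact withtop_eq_zero_of_add_self _ (hvne _ (by norm_num)) h2
  -- powers
  have hpow : ∀ (x : k) (c : ℝ), v x = (c : ℝ) → ∀ n : ℕ,
      v (x ^ n) = (((n : ℝ) * c : ℝ) : WithTop ℝ) := by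
    intro x c hc n
    induction n with
    | zero => simpa using hv1
    | succ n ih =>
      rw [pow_succ, hmul, ih, hc, ← WithTop.coe_add]
      have : (n : ℝ) * c + c = ((n + 1 : ℕ) : ℝ) * c := by push_cast; ring
      rw [this]
  -- archimedean step
  have harch : ∀ (x : k), x ≠ 0 → ∀ B' : ℝ,
      (∀ n : ℕ, (B' : WithTop ℝ) ≤ v (x ^ n)) → (0 : WithTop ℝ) ≤ v x := by
    intro x hx B' h
    obtain ⟨c, hc⟩ := WithTop.ne_top_iff_exists.mp (hvne x hx)
    rw [← hc]
    by_contra hneg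
    push_neg at hneg
    have hc0 : c < 0 := by exact_mod_cast hneg
    obtain ⟨n, hn⟩ := exists_nat_gt (B' / c)
    have hlt : (n : ℝ) * c < B' := (div_lt_iff_of_neg hc0).mp hn
    have h2 := h n
    rw [hpow x c hc.symm n] at h2
    have : B' ≤ (n : ℝ) * c := by exact_mod_cast h2
    linarith
  -- nonnegative on ℤ
  have hint : ∀ n : ℤ, (0 : WithTop ℝ) ≤ v ((n : ℤ) : k) := by
    intro n
    rcases eq_or_ne n 0 with rfl | hn
    · simp [hvtop]
    · refine harch _ (Int.cast_ne_zero.mpr hn) B fun m => ?_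
      have : ((n : k)) ^ m = (((n ^ m : ℤ) : ℤ) : k) := by push_cast; ring
      rw [this]; exact hB _
  -- nonnegative on 𝓞 k
  have hObdd : ∃ C : ℝ, ∀ a : 𝓞 k, (C : WithTop ℝ) ≤ v (algebraMap (𝓞 k) k a) := by
    let b := Module.Free.chooseBasis ℤ (𝓞 k)
    have hne : (Finset.univ : Finset (Module.Free.ChooseBasisIndex ℤ (𝓞 k))).Nonempty :=
      Finset.univ_nonempty
    have hbne : ∀ i, v (algebraMap (𝓞 k) k (b i)) ≠ ⊤ := fun i =>
      hvne _ (by simpa using b.ne_zero i)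
    choose r hr using fun i => WithTop.ne_top_iff_exists.mp (hbne i)
    refine ⟨Finset.univ.inf' hne r, fun a => ?_⟩
    conv_rhs => rw [show a = ∑ i, b.repr a i • b i from (b.sum_repr a).symm]
    rw [map_sum]
    refine sum_lower_bound v hvtop hadd _ _ _ fun i _ => ?_
    rw [map_zsmul, zsmul_eq_mul, hmul]
    calc ((Finset.univ.inf' hne r : ℝ) : WithTop ℝ)
        ≤ ((r i : ℝ) : WithTop ℝ) := by
          exact_mod_cast Finset.inf'_le r (Finset.mem_univ i)
      _ = v (algebraMap (𝓞 k) k (b i)) := hr i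
      _ ≤ v (((b.repr a i : ℤ) : k)) + v (algebraMap (𝓞 k) k (b i)) :=
          le_add_of_nonneg_left (hint _)
  obtain ⟨C, hC⟩ := hObdd
  have hO : ∀ a : 𝓞 k, (0 : WithTop ℝ) ≤ v (algebraMap (𝓞 k) k a) := by
    intro a
    rcases eq_or_ne a 0 with rfl | ha
    · simp [hvtop]
    · refine harch _ (by simpa using ha) C fun m => ?_
      rw [← map_pow]
      exact hC _
  -- the prime ideal
  let P : Ideal (𝓞 k) :=
    { carrier := {a : 𝓞 k | 0 < v (algebraMap (𝓞 k) k a)}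
      add_mem' := by
        intro a b ha hb
        simp only [Set.mem_setOf_eq, map_add] at *
        exact lt_of_lt_of_le (lt_min ha hb) (hadd _ _)
      zero_mem' := by
        simp only [Set.mem_setOf_eq, map_zero, hvtop]
        exact WithTop.top_pos
      smul_mem' := by
        intro c x hx
        simp only [Set.mem_setOf_eq, smul_eq_mul, map_mul, hmul] at *
        exact lt_of_lt_of_le hx (le_add_of_nonneg_left (hO c)) }
  have hPmem : ∀ a : 𝓞 k, a ∈ P ↔ 0 < v (algebraMap (𝓞 k) k a) := fun a => Iff.rfl
  have hnotmem : ∀ a : 𝓞 k, a ∉ P → v (algebraMap (𝓞 k) k a) = 0 := fun a ha =>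
    le_antisymm (not_lt.mp fun h => ha ((hPmem a).2 h)) (hO a)
  have hPprime : P.IsPrime := by
    rw [Ideal.isPrime_iff]
    constructor
    · intro h
      have h1 : (1 : 𝓞 k) ∈ P := h ▸ Submodule.mem_top
      rw [hPmem, map_one, hv1] at h1
      exact lt_irrefl _ h1
    · intro a b hab
      by_contra hcon
      push_neg at hcon
      obtain ⟨ha, hb⟩ := hcon
      rw [hPmem, map_mul, hmul, hnotmem a ha, hnotmem b hb, add_zero] at hab
      exact lt_irrefl _ hab
  have hPbot : P ≠ ⊥ := by
    obtain ⟨x, hx0, hxne⟩ := hnontriv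
    obtain ⟨a, bb, hbbmem, hab⟩ := IsFractionRing.div_surjective (A := 𝓞 k) x
    have hb0 : bb ≠ 0 := nonZeroDivisors.ne_zero hbbmem
    have hbk : (algebraMap (𝓞 k) k bb) ≠ 0 := by simpa using hb0
    have ha0 : a ≠ 0 := by
      rintro rfl
      rw [map_zero, zero_div] at hab
      exact hx0 hab.symm
    intro hbot
    have haP : a ∉ P := by rw [hbot]; simp [Ideal.mem_bot, ha0]
    have hbP : bb ∉ P := by rw [hbot]; simp [Ideal.mem_bot, hb0]
    have hxa : v (algebraMap (𝓞 k) k a) = v x + v (algebraMap (𝓞 k) k bb) := by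
      have heq : (algebraMap (𝓞 k) k a) = x * algebraMap (𝓞 k) k bb := by
        rw [← hab, div_mul_cancel₀ _ hbk]
      rw [heq, hmul]
    rw [hnotmem a haP, hnotmem bb hbP, add_zero] at hxa
    exact hxne hxa.symm
  let 𝔭 : HeightOneSpectrum (𝓞 k) := ⟨P, hPprime, hPbot⟩
  -- bridge between P-membership and intValuation
  have hmemval : ∀ a : 𝓞 k, a ∈ P ↔ 𝔭.intValuation a < 1 := by
    intro a
    rw [IsDedekindDomain.HeightOneSpectrum.intValuation_lt_one_iff_dvd,
      Ideal.dvd_span_singleton]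
  -- the comparison lemma
  have hcomp : ∀ a b : 𝓞 k, a ≠ 0 → b ≠ 0 → 𝔭.intValuation a ≤ 𝔭.intValuation b →
      v (algebraMap (𝓞 k) k b) ≤ v (algebraMap (𝓞 k) k a) := by
    intro a b ha hb hle
    set n : ℕ := (Associates.mk 𝔭.asIdeal).count (Associates.mk (Ideal.span {b})).factors with hn
    have hbv : 𝔭.intValuation b = ((ofAdd (-(n : ℤ)) : Multiplicative ℤ) : ℤₘ₀) := by
      rw [IsDedekindDomain.HeightOneSpectrum.intValuation_apply]
      exact 𝔭.intValuationDef_if_neg hb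
    have hdvdb : 𝔭.asIdeal ^ n ∣ Ideal.span {b} := by
      rw [← IsDedekindDomain.HeightOneSpectrum.intValuation_le_pow_iff_dvd]
      exact le_of_eq hbv
    have hndvd : ¬ 𝔭.asIdeal ^ (n + 1) ∣ Ideal.span {b} := by
      intro h
      rw [← IsDedekindDomain.HeightOneSpectrum.intValuation_le_pow_iff_dvd,
        hbv] at h
      replace h := WithZero.coe_le_coe.mp h; rw [Multiplicative.ofAdd_le] at h
      omega
    have hdvda : 𝔭.asIdeal ^ n ∣ Ideal.span {a} := by
      rw [← IsDedekindDomain.HeightOneSpectrum.intValuation_le_pow_iff_dvd]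
      exact le_trans hle (le_of_eq hbv)
    obtain ⟨J, hJ⟩ := hdvdb
    have hJP : ¬(J ≤ 𝔭.asIdeal) := by
      intro hJP
      apply hndvd
      obtain ⟨J', hJ'⟩ := Ideal.dvd_iff_le.2 hJP
      exact ⟨J', by rw [hJ, hJ', pow_succ, mul_assoc]⟩
    obtain ⟨d, hdJ, hdP⟩ := SetLike.not_le_iff_exists.1 hJP
    have hdvd : Ideal.span {b} ∣ Ideal.span {a} * Ideal.span {d} := by
      rw [hJ]
      exact mul_dvd_mul hdvda (Ideal.dvd_span_singleton.2 hdJ)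
    rw [Ideal.span_singleton_mul_span_singleton] at hdvd
    have hbad : b ∣ a * d :=
      Ideal.mem_span_singleton.1 (Ideal.le_of_dvd hdvd (Ideal.mem_span_singleton_self _))
    obtain ⟨c, hc⟩ := hbad
    have hk2 : v (algebraMap (𝓞 k) k a) + v (algebraMap (𝓞 k) k d)
        = v (algebraMap (𝓞 k) k b) + v (algebraMap (𝓞 k) k c) := by
      rw [← hmul, ← hmul, ← map_mul, ← map_mul, hc]
    rw [hnotmem d hdP, add_zero] at hk2
    rw [hk2]
    exact le_add_of_nonneg_right (hO c)
  -- uniformizer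
  obtain ⟨π, hπ⟩ := 𝔭.intValuation_exists_uniformizer
  have hπ0 : π ≠ 0 := by
    rintro rfl
    rw [Valuation.map_zero] at hπ
    exact WithZero.coe_ne_zero hπ.symm
  have hπv : 𝔭.intValuation π = ((ofAdd (-(1 : ℤ)) : Multiplicative ℤ) : ℤₘ₀) := by
    rw [IsDedekindDomain.HeightOneSpectrum.intValuation_apply]; exact hπ
  have hπP : π ∈ P := by
    rw [hmemval, hπv, ← WithZero.coe_one]
    rw [WithZero.coe_lt_coe, ← ofAdd_zero, Multiplicative.ofAdd_lt]
    norm_num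
  obtain ⟨s, hs⟩ := WithTop.ne_top_iff_exists.mp (hvne _ (by simpa using hπ0 :
    (algebraMap (𝓞 k) k π) ≠ 0))
  have hs0 : 0 < s := by
    have h1 := (hPmem π).1 hπP
    rw [← hs] at h1
    exact_mod_cast h1
  -- valuation formula on 𝓞 k
  have hπn : ∀ n : ℕ, 𝔭.intValuation (π ^ n) = ((ofAdd (-(n : ℤ)) : Multiplicative ℤ) : ℤₘ₀) := by
    intro n
    rw [map_pow, hπv, ← WithZero.coe_pow, WithZero.coe_inj, ← ofAdd_nsmul]
    congr 1
    simp
  have hval_formula : ∀ (a : 𝓞 k) (n : ℕ), a ≠ 0 →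
      𝔭.intValuation a = ((ofAdd (-(n : ℤ)) : Multiplicative ℤ) : ℤₘ₀) →
      v (algebraMap (𝓞 k) k a) = (((n : ℝ) * s : ℝ) : WithTop ℝ) := by
    intro a n ha hva
    have h1 := hcomp a (π ^ n) ha (pow_ne_zero n hπ0) (by rw [hva, hπn n])
    have h2 := hcomp (π ^ n) a (pow_ne_zero n hπ0) ha (by rw [hva, hπn n])
    have heq : v (algebraMap (𝓞 k) k a) = v (algebraMap (𝓞 k) k (π ^ n)) :=
      le_antisymm h2 h1
    rw [heq, map_pow]
    exact hpow _ s hs.symm n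
  refine ⟨𝔭, ⟨s, hs0, ?_⟩, ?_⟩
  · -- existence
    intro x m hx hvalx
    obtain ⟨a, bb, hbbmem, hab⟩ := IsFractionRing.div_surjective (A := 𝓞 k) x
    have hb0 : bb ≠ 0 := nonZeroDivisors.ne_zero hbbmem
    have hbk : (algebraMap (𝓞 k) k bb) ≠ 0 := by simpa using hb0
    have ha0 : a ≠ 0 := by
      rintro rfl
      rw [map_zero, zero_div] at hab
      exact hx hab.symm
    set na : ℕ := (Associates.mk 𝔭.asIdeal).count (Associates.mk (Ideal.span {a})).factors
    set nb : ℕ := (Associates.mk 𝔭.asIdeal).count (Associates.mk (Ideal.span {bb})).factors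
    have hva : 𝔭.intValuation a = ((ofAdd (-(na : ℤ)) : Multiplicative ℤ) : ℤₘ₀) := by
      rw [IsDedekindDomain.HeightOneSpectrum.intValuation_apply]
      exact 𝔭.intValuationDef_if_neg ha0
    have hvb : 𝔭.intValuation bb = ((ofAdd (-(nb : ℤ)) : Multiplicative ℤ) : ℤₘ₀) := by
      rw [IsDedekindDomain.HeightOneSpectrum.intValuation_apply]
      exact 𝔭.intValuationDef_if_neg hb0
    have hvx : 𝔭.valuation k x
        = ((ofAdd (-(na : ℤ)) / ofAdd (-(nb : ℤ)) : Multiplicative ℤ) : ℤₘ₀) := by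
      rw [← hab, Valuation.map_div, IsDedekindDomain.HeightOneSpectrum.valuation_of_algebraMap,
        IsDedekindDomain.HeightOneSpectrum.valuation_of_algebraMap, hva, hvb, WithZero.coe_div]
    have hm : m = (na : ℤ) - (nb : ℤ) := by
      rw [hvalx] at hvx
      rw [WithZero.coe_inj, ← ofAdd_sub] at hvx
      have := ofAdd.injective hvx
      omega
    have hxa : v (algebraMap (𝓞 k) k a) = v x + v (algebraMap (𝓞 k) k bb) := by
      have heq : (algebraMap (𝓞 k) k a) = x * algebraMap (𝓞 k) k bb := by
        rw [← hab, div_mul_cancel₀ _ hbk]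
      rw [heq, hmul]
    rw [hval_formula a na ha0 hva, hval_formula bb nb hb0 hvb] at hxa
    obtain ⟨r, hr⟩ := WithTop.ne_top_iff_exists.mp (hvne x hx)
    rw [← hr] at hxa ⊢
    rw [← WithTop.coe_add] at hxa
    have hreal : (na : ℝ) * s = r + (nb : ℝ) * s := by exact_mod_cast hxa
    have hrm : r = s * (m : ℝ) := by
      rw [hm]
      push_cast
      linarith
    exact_mod_cast hrm
  · -- uniqueness
    rintro 𝔮 ⟨s', hs', hf⟩
    have hsub : P ≤ 𝔮.asIdeal := by
      intro a haP
      by_contra haq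
      have ha0 : a ≠ 0 := by
        rintro rfl
        exact haq (Submodule.zero_mem _)
      have h1 : 𝔮.intValuation a = 1 := by
        refine le_antisymm (by
          rw [IsDedekindDomain.HeightOneSpectrum.intValuation_apply]
          exact 𝔮.intValuation_le_one a) (not_lt.mp ?_)
        intro hlt
        rw [IsDedekindDomain.HeightOneSpectrum.intValuation_lt_one_iff_dvd,
          Ideal.dvd_span_singleton] at hlt
        exact haq hlt
      have hq : 𝔮.valuation k (algebraMap (𝓞 k) k a)
          = ((ofAdd (-(0 : ℤ)) : Multiplicative ℤ) : ℤₘ₀) := by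
        rw [IsDedekindDomain.HeightOneSpectrum.valuation_of_algebraMap, h1]
        norm_num
      have hva0 := hf (algebraMap (𝓞 k) k a) 0 (by simpa using ha0) hq
      rw [hPmem] at haP
      rw [hva0] at haP
      norm_num at haP
    have hmax : P.IsMaximal := Ideal.IsPrime.isMaximal hPprime hPbot
    have heq : P = 𝔮.asIdeal := hmax.eq_of_le 𝔮.isPrime.ne_top hsub
    obtain ⟨Q, hQp, hQb⟩ := 𝔮
    simp only at heq
    subst heq
    rfl
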